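/- Let a≥0 be real, n a positive integer, and let Q₀ ≥ Q₁ ≥ ⋯ ≥ Q_{n−1} > 0 be positive reals with the convention Q_{−1}:=0. For any reals V₀,…,V_n define L V_n = Σ_{l=0}^{n−1} e^{−a l}(Q_l − Q_{l−1}) V_{n−l} − e^{−a n} Q_{n−1} V₀. Then V_n · L V_n ≥ (Q₀/2 + Q_{n−1}/4)·V_n² + (1/2) Σ_{l=1}^{n−1} e^{−2a l}(Q_l − Q_{l−1}) V_{n−l}² − e^{−2a n} Q_{n−1} V₀². -/

import Mathlib

open Real Finset

/-- Telescoping sum. -/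
lemma caputo_telescope (Q : ℕ → ℝ) : ∀ m : ℕ, 1 ≤ m →
    ∑ l ∈ Finset.Ico 1 m, (Q (l - 1) - Q l) = Q 0 - Q (m - 1) := by
  intro m hm
  induction m with
  | zero => omega
  | succ k ih =>
    rcases Nat.lt_or_ge 1 (k + 1) with h | h
    · have hk1 : 1 ≤ k := by omega
      rw [Finset.sum_Ico_succ_top hk1, ih hk1]
      have hk : k + 1 - 1 = k := rfl
      rw [hk]
      ring
    · have : k = 0 := by omega
      subst this
      simp

/-- discrete coercivity inequality for the Caputo substantial quadrature.
With `Q₀ ≥ Q₁ ≥ ⋯ ≥ Q_{n−1} > 0` (convention `Q_{−1} = 0`, encoded by the `if l = 0`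
clause) and `L V_n = Σ_{l=0}^{n−1} e^{−a l}(Q_l − Q_{l−1}) V_{n−l} − e^{−a n} Q_{n−1} V₀`,
one has the stated lower bound for `V_n · L V_n`. -/
theorem discrete_caputo_coercivity
    (a : ℝ) (ha : 0 ≤ a) (n : ℕ) (hn : 1 ≤ n)
    (Q : ℕ → ℝ)
    (hQmono : ∀ l, l + 1 < n → Q (l + 1) ≤ Q l)
    (hQpos : 0 < Q (n - 1))
    (V : ℕ → ℝ) :
    V n * ((∑ l ∈ Finset.range n,
          Real.exp (-(a * (l : ℝ))) * (Q l - if l = 0 then 0 else Q (l - 1)) * V (n - l))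
        - Real.exp (-(a * (n : ℝ))) * Q (n - 1) * V 0)
    ≥ (Q 0 / 2 + Q (n - 1) / 4) * (V n) ^ 2
      + (1 / 2) * (∑ l ∈ Finset.Ico 1 n,
          Real.exp (-(2 * a * (l : ℝ))) * (Q l - Q (l - 1)) * (V (n - l)) ^ 2)
      - Real.exp (-(2 * a * (n : ℝ))) * Q (n - 1) * (V 0) ^ 2 := by
  have hexp2 : ∀ x : ℝ, Real.exp (-(2 * x)) = Real.exp (-x) ^ 2 := by
    intro x
    rw [sq, ← Real.exp_add]
    ring_nf
  -- split off the l = 0 term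
  have hsplit : (∑ l ∈ Finset.range n,
          Real.exp (-(a * (l : ℝ))) * (Q l - if l = 0 then 0 else Q (l - 1)) * V (n - l))
      = Q 0 * V n + ∑ l ∈ Finset.Ico 1 n,
          Real.exp (-(a * (l : ℝ))) * (Q l - Q (l - 1)) * V (n - l) := by
    rw [Finset.range_eq_Ico, Finset.sum_eq_sum_Ico_succ_bot (by omega : 0 < n)]
    congr 1
    · simp
    · refine Finset.sum_congr rfl fun l hl => ?_
      have hl1 : 1 ≤ l := (Finset.mem_Ico.mp hl).1
      rw [if_neg (by omega)]
  -- key per-term bound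
  have hkey : ∀ l ∈ Finset.Ico 1 n,
      (-((Q (l - 1) - Q l) / 2) * V n ^ 2
        + (1 / 2) * (Real.exp (-(2 * a * (l : ℝ))) * (Q l - Q (l - 1)) * (V (n - l)) ^ 2))
      ≤ V n * (Real.exp (-(a * (l : ℝ))) * (Q l - Q (l - 1)) * V (n - l)) := by
    intro l hl
    obtain ⟨hl1, hln⟩ := Finset.mem_Ico.mp hl
    have hQ : Q l ≤ Q (l - 1) := by
      have h := hQmono (l - 1) (by omega)
      rwa [Nat.sub_add_cancel hl1] at h
    have hd : 0 ≤ Q (l - 1) - Q l := by linarith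
    have hc2 : Real.exp (-(2 * a * (l : ℝ))) = Real.exp (-(a * (l : ℝ))) ^ 2 := by
      rw [← hexp2]; ring_nf
    rw [hc2]
    nlinarith [mul_nonneg hd (sq_nonneg (V n - Real.exp (-(a * (l : ℝ))) * V (n - l))),
      Real.exp_pos (-(a * (l : ℝ)))]
  -- telescoped coefficient
  have htelneg : ∑ l ∈ Finset.Ico 1 n, -((Q (l - 1) - Q l) / 2)
      = -((Q 0 - Q (n - 1)) / 2) := by
    calc ∑ l ∈ Finset.Ico 1 n, -((Q (l - 1) - Q l) / 2)
        = (∑ l ∈ Finset.Ico 1 n, (Q (l - 1) - Q l)) * (-(1 / 2)) := by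
          rw [Finset.sum_mul]
          exact Finset.sum_congr rfl fun l _ => by ring
      _ = -((Q 0 - Q (n - 1)) / 2) := by rw [caputo_telescope Q n hn]; ring
  have h1 := Finset.sum_le_sum hkey
  rw [Finset.sum_add_distrib, ← Finset.sum_mul, htelneg, ← Finset.mul_sum,
    ← Finset.mul_sum] at h1
  have he : Real.exp (-(2 * a * (n : ℝ))) = Real.exp (-(a * (n : ℝ))) ^ 2 := by
    rw [← hexp2]; ring_nf
  have hB : Real.exp (-(a * (n : ℝ))) * Q (n - 1) * (V n * V 0)
      ≤ Q (n - 1) / 4 * V n ^ 2 + Q (n - 1) * Real.exp (-(a * (n : ℝ))) ^ 2 * V 0 ^ 2 := by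
    nlinarith [mul_nonneg hQpos.le
      (sq_nonneg (V n / 2 - Real.exp (-(a * (n : ℝ))) * V 0))]
  rw [ge_iff_le, hsplit, he]
  nlinarith [h1, hB]
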